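/- Let d ≥ 1 and r ≥ 1 be natural numbers and let G be a simple graph on n vertices with average degree at most d (i.e. 2·e(G) ≤ d·n). Let k be a natural number with (k + d + 5)·(1 + C(2(d+1), r−1)) + 1 + C(2(d+1), r−1) ≤ n/2, where C(a,b) denotes the binomial coefficient (equivalently, k ≤ (n/2 − 1)/(1 + C(2(d+1), r−1)) − d − 5). If H is any simple graph on n vertices that shares at least n − k common cards with G, then G and H contain the same number of cliques of size r. -/

import Mathlib

open SimpleGraph

/-- The degree of a vertex, as the cardinality of its neighbour set. -/
noncomputable def gdeg {V : Type} (G : SimpleGraph V) (v : V) : ℕ :=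
  (G.neighborSet v).ncard

/-- The number of edges of a graph. -/
noncomputable def ecount {V : Type} (G : SimpleGraph V) : ℕ :=
  G.edgeSet.ncard

/-- The card `G - v`: the induced subgraph on the complement of `v`. -/
def gcard {V : Type} (G : SimpleGraph V) (v : V) : SimpleGraph {w : V // w ≠ v} :=
  G.induce {w : V | w ≠ v}

/-- The number of vertices of degree exactly `t`. -/
noncomputable def dcount {V : Type} (G : SimpleGraph V) (t : ℕ) : ℕ :=
  {v : V | gdeg G v = t}.ncard

/-- `G` and `H` share at least `m` common cards: there are `m` vertices of `G`,
injectively matched with vertices of `H`, whose cards are pairwise isomorphic. -/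
def SharesCards {n : ℕ} (G H : SimpleGraph (Fin n)) (m : ℕ) : Prop :=
  ∃ (S : Finset (Fin n)) (f : Fin n → Fin n),
    m ≤ S.card ∧ Set.InjOn f ↑S ∧
    ∀ v ∈ S, Nonempty (gcard G v ≃g gcard H (f v))

/-- The number of `r`-cliques of a graph. -/
noncomputable def cliqueCount {V : Type} (G : SimpleGraph V) (r : ℕ) : ℕ :=
  {s : Finset V | G.IsNClique r s}.ncard


set_option linter.unusedSectionVars false
set_option linter.unusedVariables false
set_option linter.unnecessarySimpa false
set_option maxHeartbeats 1000000

open Finset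

noncomputable section CliqueAux

open scoped Classical

variable {W : Type} [Fintype W] [DecidableEq W]

/-- The finset of `j`-cliques. -/
noncomputable def KK (A : SimpleGraph W) (j : ℕ) : Finset (Finset W) :=
  univ.filter (fun s => A.IsNClique j s)

/-- Number of `j`-cliques. -/
noncomputable def NN (A : SimpleGraph W) (j : ℕ) : ℕ := (KK A j).card

/-- Number of `j`-cliques containing `u`. -/
noncomputable def xF (A : SimpleGraph W) (j : ℕ) (u : W) : ℕ :=
  ((KK A j).filter (fun s => u ∈ s)).card

/-- Number of vertices whose clique-count is at most `T`. -/
noncomputable def cumx (A : SimpleGraph W) (j T : ℕ) : ℕ :=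
  (univ.filter (fun u => xF A j u ≤ T)).card

lemma mem_KK {A : SimpleGraph W} {j : ℕ} {s : Finset W} :
    s ∈ KK A j ↔ A.IsNClique j s := by simp [KK]

lemma gcard_adj {A : SimpleGraph W} {v : W} {a b : {w : W // w ≠ v}} :
    (gcard A v).Adj a b ↔ A.Adj a b := Iff.rfl

lemma isNClique_gcard_iff {A : SimpleGraph W} {j : ℕ} {v : W}
    {t : Finset {w : W // w ≠ v}} :
    (gcard A v).IsNClique j t ↔
      A.IsNClique j (t.map (Function.Embedding.subtype _)) := by
  constructor
  · rintro ⟨hcl, hcard⟩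
    refine ⟨?_, by rwa [Finset.card_map]⟩
    rintro a ha b hb hab
    simp only [Finset.coe_map, Set.mem_image, Finset.mem_coe] at ha hb
    obtain ⟨a', ha', rfl⟩ := ha
    obtain ⟨b', hb', rfl⟩ := hb
    have hne : a' ≠ b' := by
      intro h; apply hab; rw [h]
    exact hcl ha' hb' hne
  · rintro ⟨hcl, hcard⟩
    refine ⟨?_, by rwa [Finset.card_map] at hcard⟩
    intro a ha b hb hab
    have hmem : (a : W) ∈ t.map (Function.Embedding.subtype _) := by
      simp only [Finset.mem_map, Function.Embedding.coe_subtype]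
      exact ⟨a, ha, rfl⟩
    have hmem' : (b : W) ∈ t.map (Function.Embedding.subtype _) := by
      simp only [Finset.mem_map, Function.Embedding.coe_subtype]
      exact ⟨b, hb, rfl⟩
    have : A.Adj a b := hcl (Finset.mem_coe.2 hmem) (Finset.mem_coe.2 hmem')
      (Subtype.coe_injective.ne hab)
    exact this

lemma NN_gcard (A : SimpleGraph W) (j : ℕ) (v : W) :
    NN (gcard A v) j = ((KK A j).filter (fun s => v ∉ s)).card := by
  apply Finset.card_bij (fun t _ => t.map (Function.Embedding.subtype _))
  · intro t ht
    rw [mem_KK] at ht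
    rw [Finset.mem_filter, mem_KK]
    refine ⟨(isNClique_gcard_iff.1 ht), ?_⟩
    intro hv
    simp only [Finset.mem_map, Function.Embedding.coe_subtype] at hv
    obtain ⟨a, _, ha⟩ := hv
    exact a.2 ha
  · intro t₁ h₁ t₂ h₂ h
    exact Finset.map_injective _ h
  · intro s hs
    rw [Finset.mem_filter, mem_KK] at hs
    refine ⟨s.subtype (fun w => w ≠ v), ?_, ?_⟩
    · rw [mem_KK, isNClique_gcard_iff, Finset.subtype_map,
        Finset.filter_true_of_mem (fun x hx => ?_)]
      · exact hs.1
      · intro hxv; exact hs.2 (hxv ▸ hx)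
    · rw [Finset.subtype_map, Finset.filter_true_of_mem (fun x hx => ?_)]
      intro hxv; exact hs.2 (hxv ▸ hx)

lemma NN_split (A : SimpleGraph W) (j : ℕ) (v : W) :
    NN A j = xF A j v + NN (gcard A v) j := by
  rw [NN_gcard A j v, xF]
  exact (Finset.card_filter_add_card_filter_not (s := KK A j)
    (p := fun s => v ∈ s)).symm

-- ==== cliques through u avoiding v inject into cliques of the card ====

lemma card_avoid_le_xF_gcard (A : SimpleGraph W) (j : ℕ) {v : W} (u : {w : W // w ≠ v}) :
    ((KK A j).filter (fun s => (u : W) ∈ s ∧ v ∉ s)).card ≤ xF (gcard A v) j u := by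
  classical
  apply Finset.card_le_card_of_injOn (fun s => s.subtype (fun w => w ≠ v))
  · intro s hs
    simp only [Finset.mem_coe] at hs ⊢
    rw [Finset.mem_filter, mem_KK] at hs
    obtain ⟨hcl, hu, hv⟩ := hs
    have hmap : (s.subtype (fun w => w ≠ v)).map (Function.Embedding.subtype _) = s := by
      rw [Finset.subtype_map, Finset.filter_true_of_mem]
      intro x hx hxv; exact hv (hxv ▸ hx)
    rw [Finset.mem_filter, mem_KK]
    constructor
    · rw [isNClique_gcard_iff, hmap]; exact hcl
    · rw [Finset.mem_subtype]; exact hu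
  · intro s hs s' hs' h
    rw [Finset.mem_coe, Finset.mem_filter] at hs hs'
    have hmap : ∀ t : Finset W, v ∉ t → (t.subtype (fun w => w ≠ v)).map
        (Function.Embedding.subtype _) = t := by
      intro t hv
      rw [Finset.subtype_map, Finset.filter_true_of_mem]
      intro x hx hxv; exact hv (hxv ▸ hx)
    have hh := congrArg (Finset.map (Function.Embedding.subtype fun w => w ≠ v)) h
    rwa [hmap s hs.2.2, hmap s' hs'.2.2] at hh

lemma xF_gcard_le (A : SimpleGraph W) (j : ℕ) {v : W} (u : {w : W // w ≠ v}) :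
    xF (gcard A v) j u ≤ xF A j (u : W) := by
  classical
  apply Finset.card_le_card_of_injOn (fun t => t.map (Function.Embedding.subtype _))
  · intro t ht
    simp only [Finset.mem_coe] at ht ⊢
    rw [Finset.mem_filter, mem_KK] at ht
    rw [Finset.mem_filter, mem_KK]
    refine ⟨isNClique_gcard_iff.1 ht.1, ?_⟩
    simp only [Finset.mem_map, Function.Embedding.coe_subtype]
    exact ⟨u, ht.2, rfl⟩
  · intro t _ t' _ h
    exact Finset.map_injective _ h

lemma xF_split (A : SimpleGraph W) (j : ℕ) (u v : W) :
    xF A j u = ((KK A j).filter (fun s => u ∈ s ∧ v ∈ s)).card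
      + ((KK A j).filter (fun s => u ∈ s ∧ v ∉ s)).card := by
  classical
  rw [xF]
  rw [← Finset.filter_filter, ← Finset.filter_filter]
  exact (Finset.card_filter_add_card_filter_not
    (s := (KK A j).filter (fun s => u ∈ s)) (p := fun s => v ∈ s)).symm

lemma xF_both_eq_zero (A : SimpleGraph W) (j : ℕ) {u v : W} (hne : u ≠ v)
    (hadj : ¬ A.Adj u v) :
    ((KK A j).filter (fun s => u ∈ s ∧ v ∈ s)).card = 0 := by
  classical
  rw [Finset.card_eq_zero, Finset.filter_eq_empty_iff]
  rintro s hs ⟨hu, hv⟩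
  rw [mem_KK] at hs
  exact hadj (hs.1 hu hv hne)

lemma xF_both_le_one (A : SimpleGraph W) {u v : W} (hne : u ≠ v) :
    ((KK A 2).filter (fun s => u ∈ s ∧ v ∈ s)).card ≤ 1 := by
  classical
  rw [Finset.card_le_one]
  intro s hs s' hs'
  rw [Finset.mem_filter, mem_KK] at hs hs'
  have key : ∀ t : Finset W, A.IsNClique 2 t → u ∈ t → v ∈ t → t = {u, v} := by
    intro t ht hu hv
    apply (Finset.eq_of_subset_of_card_le ?_ ?_).symm
    · intro x hx
      simp only [Finset.mem_insert, Finset.mem_singleton] at hx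
      rcases hx with rfl | rfl
      exacts [hu, hv]
    · rw [ht.card_eq, Finset.card_insert_of_notMem (by simpa using hne),
        Finset.card_singleton]
  rw [key s hs.1 hs.2.1 hs.2.2, key s' hs'.1 hs'.2.1 hs'.2.2]

-- ==== isomorphism transfer ====

variable {W' : Type} [Fintype W'] [DecidableEq W']

lemma isNClique_iso_iff {A : SimpleGraph W} {B : SimpleGraph W'} (φ : A ≃g B)
    {j : ℕ} {s : Finset W} :
    A.IsNClique j s ↔ B.IsNClique j (s.map φ.toEquiv.toEmbedding) := by
  constructor
  · rintro ⟨hcl, hcard⟩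
    refine ⟨?_, by rwa [Finset.card_map]⟩
    rintro a ha b hb hab
    simp only [Finset.coe_map, Set.mem_image, Finset.mem_coe,
      Equiv.coe_toEmbedding] at ha hb
    obtain ⟨a', ha', rfl⟩ := ha
    obtain ⟨b', hb', rfl⟩ := hb
    have hne : a' ≠ b' := fun h => hab (by rw [h])
    exact φ.map_adj_iff.2 (hcl ha' hb' hne)
  · rintro ⟨hcl, hcard⟩
    refine ⟨?_, by rwa [Finset.card_map] at hcard⟩
    intro a ha b hb hab
    have h1 : φ a ∈ (s.map φ.toEquiv.toEmbedding : Finset W') := by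
      simp only [Finset.mem_map, Equiv.coe_toEmbedding]
      exact ⟨a, ha, rfl⟩
    have h2 : φ b ∈ (s.map φ.toEquiv.toEmbedding : Finset W') := by
      simp only [Finset.mem_map, Equiv.coe_toEmbedding]
      exact ⟨b, hb, rfl⟩
    have := hcl (Finset.mem_coe.2 h1) (Finset.mem_coe.2 h2)
      (fun h => hab (φ.toEquiv.injective h))
    exact φ.map_adj_iff.1 this

lemma NN_iso {A : SimpleGraph W} {B : SimpleGraph W'} (φ : A ≃g B) (j : ℕ) :
    NN A j = NN B j := by
  apply Finset.card_bij (fun s _ => s.map φ.toEquiv.toEmbedding)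
  · intro s hs
    rw [mem_KK] at hs ⊢
    exact (isNClique_iso_iff φ).1 hs
  · intro s _ s' _ h
    exact Finset.map_injective _ h
  · intro t ht
    rw [mem_KK] at ht
    refine ⟨t.map φ.symm.toEquiv.toEmbedding, ?_, ?_⟩
    · rw [mem_KK, isNClique_iso_iff φ]
      convert ht using 1
      rw [Finset.map_map]
      ext a
      simp
    · rw [Finset.map_map]
      ext a
      simp

lemma xF_iso {A : SimpleGraph W} {B : SimpleGraph W'} (φ : A ≃g B) (j : ℕ) (u : W) :
    xF A j u = xF B j (φ u) := by
  apply Finset.card_bij (fun s _ => s.map φ.toEquiv.toEmbedding)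
  · intro s hs
    rw [Finset.mem_filter, mem_KK] at hs ⊢
    refine ⟨(isNClique_iso_iff φ).1 hs.1, ?_⟩
    simp only [Finset.mem_map, Equiv.coe_toEmbedding]
    exact ⟨u, hs.2, rfl⟩
  · intro s _ s' _ h
    exact Finset.map_injective _ h
  · intro t ht
    rw [Finset.mem_filter, mem_KK] at ht
    refine ⟨t.map φ.symm.toEquiv.toEmbedding, ?_, ?_⟩
    · rw [Finset.mem_filter, mem_KK]
      constructor
      · rw [isNClique_iso_iff φ]
        convert ht.1 using 1
        rw [Finset.map_map]
        ext a
        simp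
      · simp only [Finset.mem_map, Equiv.coe_toEmbedding]
        exact ⟨φ u, ht.2, by simp⟩
    · rw [Finset.map_map]
      ext a
      simp

lemma cumx_iso {A : SimpleGraph W} {B : SimpleGraph W'} (φ : A ≃g B) (j T : ℕ) :
    cumx A j T = cumx B j T := by
  apply Finset.card_bij (fun u _ => φ u)
  · intro u hu
    rw [Finset.mem_filter] at hu ⊢
    exact ⟨Finset.mem_univ _, by rw [← xF_iso φ]; exact hu.2⟩
  · intro u _ u' _ h
    exact φ.toEquiv.injective h
  · intro w hw
    rw [Finset.mem_filter] at hw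
    refine ⟨φ.symm w, Finset.mem_filter.2 ⟨Finset.mem_univ _, ?_⟩, by simp⟩
    rw [xF_iso φ]
    simpa using hw.2

lemma filter_xF_iso {A : SimpleGraph W} {B : SimpleGraph W'} (φ : A ≃g B) (j : ℕ)
    (p : ℕ → Prop) [DecidablePred p] :
    (univ.filter (fun u => p (xF A j u))).card
      = (univ.filter (fun w => p (xF B j w))).card := by
  classical
  apply Finset.card_bij (fun u _ => φ u)
  · intro u hu
    rw [Finset.mem_filter] at hu ⊢
    exact ⟨Finset.mem_univ _, by rw [← xF_iso φ]; exact hu.2⟩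
  · intro u _ u' _ h
    exact φ.toEquiv.injective h
  · intro w hw
    rw [Finset.mem_filter] at hw
    refine ⟨φ.symm w, Finset.mem_filter.2 ⟨Finset.mem_univ _, ?_⟩, by simp⟩
    rw [xF_iso φ]
    simpa using hw.2

lemma card_subtype_of_forall {α : Type} [DecidableEq α] (s : Finset α) (p : α → Prop)
    [DecidablePred p] (h : ∀ x ∈ s, p x) : (s.subtype p).card = s.card := by
  rw [← Finset.card_map (Function.Embedding.subtype p), Finset.subtype_map,
    Finset.filter_true_of_mem h]

-- ==== degree bounds ====

lemma xF_le_choose (A : SimpleGraph W) (j : ℕ) (hj : 1 ≤ j) (u : W) :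
    xF A j u ≤ (A.degree u).choose (j - 1) := by
  classical
  have : xF A j u ≤ ((A.neighborFinset u).powersetCard (j-1)).card := by
    apply Finset.card_le_card_of_injOn (fun s => s.erase u)
    · intro s hs
      simp only [Finset.mem_coe] at hs ⊢
      rw [Finset.mem_filter, mem_KK] at hs
      rw [Finset.mem_powersetCard]
      constructor
      · intro x hx
        rw [Finset.mem_erase] at hx
        rw [SimpleGraph.mem_neighborFinset]
        exact hs.1.1 (Finset.mem_coe.2 hs.2) (Finset.mem_coe.2 hx.2) (Ne.symm hx.1)
      · rw [Finset.card_erase_of_mem hs.2, hs.1.card_eq]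
    · intro s hs s' hs' h
      rw [Finset.mem_coe, Finset.mem_filter] at hs hs'
      have h1 : insert u (s.erase u) = s := Finset.insert_erase hs.2
      have h2 : insert u (s'.erase u) = s' := Finset.insert_erase hs'.2
      rw [← h1, ← h2]
      simp only at h
      rw [h]
  rwa [Finset.card_powersetCard, SimpleGraph.card_neighborFinset_eq_degree] at this

lemma deg_ge_of_xF_pos (A : SimpleGraph W) (j : ℕ) (u : W) (h : 1 ≤ xF A j u) :
    j - 1 ≤ A.degree u := by
  classical
  rw [xF] at h
  obtain ⟨s, hs⟩ := Finset.card_pos.1 h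
  rw [Finset.mem_filter, mem_KK] at hs
  have hsub : s.erase u ⊆ A.neighborFinset u := by
    intro x hx
    rw [Finset.mem_erase] at hx
    rw [SimpleGraph.mem_neighborFinset]
    exact hs.1.1 (Finset.mem_coe.2 hs.2) (Finset.mem_coe.2 hx.2) (Ne.symm hx.1)
  have := Finset.card_le_card hsub
  rwa [Finset.card_erase_of_mem hs.2, hs.1.card_eq,
    SimpleGraph.card_neighborFinset_eq_degree] at this

lemma xF_two_eq_degree (A : SimpleGraph W) (u : W) :
    xF A 2 u = A.degree u := by
  classical
  apply le_antisymm
  · have := xF_le_choose A 2 (by norm_num) u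
    simpa using this
  · rw [← SimpleGraph.card_neighborFinset_eq_degree]
    apply Finset.card_le_card_of_injOn (fun w => ({u, w} : Finset W))
    · intro w hw
      simp only [Finset.mem_coe] at hw ⊢
      rw [SimpleGraph.mem_neighborFinset] at hw
      rw [Finset.mem_filter, mem_KK]
      refine ⟨⟨?_, ?_⟩, by simp⟩
      · intro a ha b hb hab
        simp only [Finset.coe_insert, Set.mem_insert_iff, Finset.coe_singleton,
          Set.mem_singleton_iff] at ha hb
        rcases ha with rfl | rfl <;> rcases hb with rfl | rfl
        · exact absurd rfl hab
        · exact hw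
        · exact hw.symm
        · exact absurd rfl hab
      · rw [Finset.card_insert_of_notMem (by simpa using hw.ne), Finset.card_singleton]
    · intro w hw w' hw' h
      rw [Finset.mem_coe, SimpleGraph.mem_neighborFinset] at hw hw'
      simp only at h
      have : w ∈ ({u, w'} : Finset W) := h ▸ (by simp : w ∈ ({u, w} : Finset W))
      simp only [Finset.mem_insert, Finset.mem_singleton] at this
      rcases this with rfl | rfl
      · exact absurd hw (A.loopless.irrefl _)
      · rfl

lemma sum_xF (A : SimpleGraph W) (j : ℕ) :
    ∑ u, xF A j u = j * NN A j := by
  classical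
  have : ∑ u, xF A j u = ∑ u, ∑ s ∈ KK A j, (if u ∈ s then 1 else 0) := by
    apply Finset.sum_congr rfl
    intro u _
    rw [xF, Finset.card_filter]
  rw [this, Finset.sum_comm]
  have : ∀ s ∈ KK A j, ∑ u, (if u ∈ s then 1 else 0) = j := by
    intro s hs
    rw [mem_KK] at hs
    rw [Finset.sum_ite_mem, Finset.univ_inter, Finset.sum_const, smul_eq_mul, mul_one]
    exact hs.card_eq
  rw [Finset.sum_congr rfl this, Finset.sum_const, smul_eq_mul, NN, mul_comm]

-- ==== cumulative count comparisons ====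

lemma cumx_le_cumx_gcard_add_one (A : SimpleGraph W) (j T : ℕ) (v : W) :
    cumx A j T ≤ cumx (gcard A v) j T + 1 := by
  classical
  have h1 : cumx A j T ≤ ((univ.filter (fun u => xF A j u ≤ T)).erase v).card + 1 := by
    rw [cumx]
    have := Finset.card_erase_add_one (s := univ.filter (fun u => xF A j u ≤ T)) (a := v)
    by_cases hv : v ∈ univ.filter (fun u => xF A j u ≤ T)
    · rw [this hv]
    · have : (univ.filter (fun u => xF A j u ≤ T)).erase v
          = univ.filter (fun u => xF A j u ≤ T) := Finset.erase_eq_of_notMem hv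
      rw [this]; omega
  refine le_trans h1 ?_
  have h2 : ((univ.filter (fun u => xF A j u ≤ T)).erase v).card
      ≤ cumx (gcard A v) j T := by
    set E := (univ.filter (fun u => xF A j u ≤ T)).erase v with hE
    have hcard : (E.subtype (fun w => w ≠ v)).card = E.card := by
      have hmap : (E.subtype (fun w => w ≠ v)).map (Function.Embedding.subtype _) = E := by
        rw [Finset.subtype_map, Finset.filter_true_of_mem]
        intro x hx
        rw [hE, Finset.mem_erase] at hx
        exact hx.1
      calc (E.subtype (fun w => w ≠ v)).card
          = ((E.subtype (fun w => w ≠ v)).map (Function.Embedding.subtype _)).card :=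
            (Finset.card_map _).symm
        _ = E.card := by rw [hmap]
    rw [← hcard]
    unfold cumx
    apply Finset.card_le_card
    intro u hu
    rw [Finset.mem_subtype, hE, Finset.mem_erase, Finset.mem_filter] at hu
    rw [Finset.mem_filter]
    exact ⟨Finset.mem_univ _, le_trans (xF_gcard_le A j u) hu.2.2⟩
  omega

lemma cumx_gcard_le_cumx_add_degree (A : SimpleGraph W) (j T : ℕ) (v : W) :
    cumx (gcard A v) j T ≤ cumx A j T + A.degree v := by
  classical
  have key : cumx (gcard A v) j T ≤
      ((univ.filter (fun u => xF A j u ≤ T)) ∪ A.neighborFinset v).card := by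
    unfold cumx
    apply Finset.card_le_card_of_injOn (fun u : {w : W // w ≠ v} => (u : W))
    · intro u hu
      simp only [Finset.mem_coe] at hu ⊢
      rw [Finset.mem_filter] at hu
      rw [Finset.mem_union]
      by_cases hadj : A.Adj (u : W) v
      · right
        rw [SimpleGraph.mem_neighborFinset]
        exact hadj.symm
      · left
        rw [Finset.mem_filter]
        refine ⟨Finset.mem_univ _, ?_⟩
        have hsplit := xF_split A j (u : W) v
        rw [xF_both_eq_zero A j u.2 hadj, zero_add] at hsplit
        rw [hsplit]
        exact le_trans (card_avoid_le_xF_gcard A j u) hu.2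
    · intro u _ u' _ h
      exact Subtype.coe_injective h
  refine le_trans key ?_
  refine le_trans (Finset.card_union_le _ _) ?_
  rw [cumx, SimpleGraph.card_neighborFinset_eq_degree]

-- ==== telescoping ====

lemma tele (P : ℕ → ℕ) (Wt D : ℕ) (hD : 1 ≤ D)
    (hb : ∀ T, T < D → P T ≤ Wt)
    (hs : ∀ T, D ≤ T → P T ≤ P (T - D) + Wt) :
    ∀ T, P T ≤ (T / D + 1) * Wt := by
  intro T
  induction T using Nat.strong_induction_on with
  | _ T ih =>
    rcases Nat.lt_or_ge T D with h | h
    · rw [Nat.div_eq_of_lt h]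
      simpa using hb T h
    · have h1 := hs T h
      have h2 := ih (T - D) (by omega)
      have h3 : T / D = (T - D) / D + 1 := Nat.div_eq_sub_div (by omega) h
      rw [h3]
      calc P T ≤ ((T - D) / D + 1) * Wt + Wt := by omega
        _ = ((T - D) / D + 1 + 1) * Wt := by ring
      
-- ==== binomial lower bound ====

lemma le_choose_of_lt (m i : ℕ) (h1 : 1 ≤ i) (h2 : i < m) : m ≤ m.choose i := by
  induction m generalizing i with
  | zero => omega
  | succ m ih =>
    rcases Nat.eq_or_lt_of_le h1 with rfl | hi
    · simp [Nat.choose_one_right]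
    · rcases Nat.lt_or_ge i m with him | him
      · obtain ⟨i', rfl⟩ : ∃ i', i = i' + 1 := ⟨i - 1, by omega⟩
        rw [Nat.choose_succ_succ]
        have hA := ih i' (by omega) (by omega)
        have hB : 1 ≤ m.choose (i' + 1) := Nat.choose_pos (by omega)
        simp only [Nat.succ_eq_add_one] at *
        omega
      · have hieq : i = m := by omega
        subst hieq
        have hsym : (i + 1).choose i = i + 1 := by
          have h := Nat.choose_symm (n := i + 1) (k := 1) (by omega)
          simpa using h
        omega

-- ==== interface with cliqueCount ====

lemma cliqueCount_eq_NN (A : SimpleGraph W) (j : ℕ) :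
    cliqueCount A j = NN A j := by
  classical
  rw [cliqueCount, NN, KK]
  rw [Set.ncard_eq_toFinset_card', Set.toFinset_setOf]

-- ==== window lemmas over Fin n ====

section Windows

variable {n k d : ℕ} {G H : SimpleGraph (Fin n)} {S : Finset (Fin n)} {f : Fin n → Fin n}

/-- generic: few vertices outside `S`. -/
lemma cumx_small_le (hScard : n ≤ S.card + k) {A : SimpleGraph (Fin n)} {j T : ℕ}
    (hp : ∀ u ∈ S, ¬ (xF A j u ≤ T)) : cumx A j T ≤ k := by
  classical
  unfold cumx
  have hsub : univ.filter (fun u => xF A j u ≤ T) ⊆ univ \ S := by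
    intro u hu
    rw [Finset.mem_filter] at hu
    rw [Finset.mem_sdiff]
    exact ⟨Finset.mem_univ _, fun huS => hp u huS hu.2⟩
  have := Finset.card_le_card hsub
  rw [Finset.card_sdiff_of_subset (Finset.subset_univ S)] at this
  have hn : (univ : Finset (Fin n)).card = n := by
    rw [Finset.card_univ, Fintype.card_fin]
  omega

lemma shift_up (hScard : n ≤ S.card + k) (hinj : Set.InjOn f ↑S)
    {j Δ : ℕ} (hrel : ∀ u ∈ S, xF G j u = xF H j (f u) + Δ)
    {T : ℕ} (hT : Δ ≤ T) :
    cumx G j T ≤ cumx H j (T - Δ) + k := by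
  classical
  set F := univ.filter (fun u => xF G j u ≤ T) with hF
  have hsplit : (F ∩ S).card + (F \ S).card = F.card :=
    Finset.card_inter_add_card_sdiff F S
  have h1 : (F ∩ S).card ≤ cumx H j (T - Δ) := by
    apply Finset.card_le_card_of_injOn f
    · intro u hu
      simp only [Finset.mem_coe] at hu ⊢
      rw [Finset.mem_inter, hF, Finset.mem_filter] at hu
      rw [Finset.mem_filter]
      refine ⟨Finset.mem_univ _, ?_⟩
      have := hrel u hu.2
      omega
    · exact hinj.mono (by intro u hu; exact Finset.mem_coe.2 (Finset.mem_inter.1 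
        (Finset.mem_coe.1 hu)).2)
  have h2 : (F \ S).card ≤ k := by
    have hsub : F \ S ⊆ univ \ S := by
      intro u hu
      rw [Finset.mem_sdiff] at hu ⊢
      exact ⟨Finset.mem_univ _, hu.2⟩
    have := Finset.card_le_card hsub
    rw [Finset.card_sdiff_of_subset (Finset.subset_univ S)] at this
    have hn : (univ : Finset (Fin n)).card = n := by
      rw [Finset.card_univ, Fintype.card_fin]
    omega
  have : cumx G j T = F.card := rfl
  omega

lemma shift_down (hScard : n ≤ S.card + k) (hinj : Set.InjOn f ↑S)
    {j Δ : ℕ} (hΔ : 1 ≤ Δ) (hrel : ∀ u ∈ S, xF H j (f u) = xF G j u + Δ)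
    (T : ℕ) :
    cumx H j T ≤ (if Δ ≤ T then cumx G j (T - Δ) else 0) + k := by
  classical
  rcases Nat.eq_zero_or_pos n with hn | hn
  · have h0 : cumx H j T ≤ (univ : Finset (Fin n)).card :=
      Finset.card_le_card (Finset.filter_subset _ _)
    rw [Finset.card_univ, Fintype.card_fin] at h0
    omega
  haveI : Nonempty (Fin n) := ⟨⟨0, hn⟩⟩
  set F := univ.filter (fun w => xF H j w ≤ T) with hF
  set I := S.image f with hI
  have hsplit : (F ∩ I).card + (F \ I).card = F.card :=
    Finset.card_inter_add_card_sdiff F I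
  have h2 : (F \ I).card ≤ k := by
    have hsub : F \ I ⊆ univ \ I := by
      intro w hw
      rw [Finset.mem_sdiff] at hw ⊢
      exact ⟨Finset.mem_univ _, hw.2⟩
    have hcards := Finset.card_le_card hsub
    rw [Finset.card_sdiff_of_subset (Finset.subset_univ I)] at hcards
    have hIcard : I.card = S.card := Finset.card_image_of_injOn hinj
    have hn' : (univ : Finset (Fin n)).card = n := by
      rw [Finset.card_univ, Fintype.card_fin]
    omega
  have hcum : cumx H j T = F.card := rfl
  by_cases hTD : Δ ≤ T
  · rw [if_pos hTD]
    have h1 : (F ∩ I).card ≤ cumx G j (T - Δ) := by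
      apply Finset.card_le_card_of_injOn (Function.invFunOn f ↑S)
      · intro w hw
        simp only [Finset.mem_coe] at hw ⊢
        rw [Finset.mem_inter] at hw
        obtain ⟨u, hu, huw⟩ := Finset.mem_image.1 hw.2
        have hex : ∃ a ∈ (↑S : Set (Fin n)), f a = w := ⟨u, Finset.mem_coe.2 hu, huw⟩
        have hmem := Function.invFunOn_mem hex
        have heq := Function.invFunOn_eq hex
        rw [Finset.mem_filter]
        refine ⟨Finset.mem_univ _, ?_⟩
        have hr1 := hrel _ (Finset.mem_coe.1 hmem)
        rw [heq] at hr1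
        have hwT : xF H j w ≤ T := (Finset.mem_filter.1 hw.1).2
        omega
      · intro w hw w' hw' heq'
        rw [Finset.mem_coe, Finset.mem_inter] at hw hw'
        obtain ⟨u, hu, huw⟩ := Finset.mem_image.1 hw.2
        obtain ⟨u', hu', huw'⟩ := Finset.mem_image.1 hw'.2
        have hex : ∃ a ∈ (↑S : Set (Fin n)), f a = w := ⟨u, Finset.mem_coe.2 hu, huw⟩
        have hex' : ∃ a ∈ (↑S : Set (Fin n)), f a = w' := ⟨u', Finset.mem_coe.2 hu', huw'⟩
        rw [← Function.invFunOn_eq hex, ← Function.invFunOn_eq hex', heq']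
    omega
  · rw [if_neg hTD]
    have h1 : (F ∩ I).card = 0 := by
      rw [Finset.card_eq_zero]
      rw [Finset.eq_empty_iff_forall_notMem]
      intro w hw
      rw [Finset.mem_inter] at hw
      obtain ⟨u, hu, huw⟩ := Finset.mem_image.1 hw.2
      have hr1 := hrel u hu
      rw [huw] at hr1
      have hwT : xF H j w ≤ T := (Finset.mem_filter.1 hw.1).2
      omega
    omega

lemma window_A (hScard : n ≤ S.card + k) (hinj : Set.InjOn f ↑S)
    {j Δ : ℕ} (hΔ : 1 ≤ Δ) (hrel : ∀ u ∈ S, xF G j u = xF H j (f u) + Δ)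
    {v₀ : Fin n} (hv₀ : v₀ ∈ S) (φ : gcard G v₀ ≃g gcard H (f v₀)) :
    ∀ T, cumx G j T ≤ (T / Δ + 1) * (k + G.degree v₀ + 1) := by
  apply tele _ _ Δ hΔ
  · intro T hT
    have hout : cumx G j T ≤ k := by
      apply cumx_small_le hScard
      intro u hu hle
      have := hrel u hu
      omega
    omega
  · intro T hT
    have s1 := shift_up hScard hinj hrel hT
    have s2 := cumx_le_cumx_gcard_add_one H j (T - Δ) (f v₀)
    have s3 := cumx_iso φ j (T - Δ)
    have s4 := cumx_gcard_le_cumx_add_degree G j (T - Δ) v₀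
    omega

lemma window_B (hScard : n ≤ S.card + k) (hinj : Set.InjOn f ↑S)
    {j Δ : ℕ} (hΔ : 1 ≤ Δ) (hrel : ∀ u ∈ S, xF H j (f u) = xF G j u + Δ)
    {v₀ : Fin n} (hv₀ : v₀ ∈ S) (φ : gcard G v₀ ≃g gcard H (f v₀)) :
    ∀ T, cumx G j T ≤ (T / Δ + 1) * (k + H.degree (f v₀) + 1) := by
  apply tele _ _ Δ hΔ
  · intro T hT
    have s1 := cumx_le_cumx_gcard_add_one G j T v₀
    have s2 := cumx_iso φ j T
    have s3 := cumx_gcard_le_cumx_add_degree H j T (f v₀)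
    have s4 := shift_down hScard hinj hΔ hrel T
    rw [if_neg (by omega)] at s4
    omega
  · intro T hT
    have s1 := cumx_le_cumx_gcard_add_one G j T v₀
    have s2 := cumx_iso φ j T
    have s3 := cumx_gcard_le_cumx_add_degree H j T (f v₀)
    have s4 := shift_down hScard hinj hΔ hrel T
    rw [if_pos hT] at s4
    omega

end Windows

-- ==== small extras ====

lemma xF_one (A : SimpleGraph W) (u : W) : xF A 1 u = 1 := by
  classical
  rw [xF]
  rw [Finset.card_eq_one]
  refine ⟨{u}, ?_⟩
  ext s
  rw [Finset.mem_filter, mem_KK, Finset.mem_singleton]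
  constructor
  · rintro ⟨hcl, hu⟩
    rw [Finset.eq_singleton_iff_unique_mem]
    refine ⟨hu, ?_⟩
    intro x hx
    rcases Finset.card_eq_one.1 hcl.card_eq with ⟨a, ha⟩
    rw [ha, Finset.mem_singleton] at hx hu
    rw [hx, hu]
  · rintro rfl
    refine ⟨⟨?_, Finset.card_singleton u⟩, Finset.mem_singleton_self u⟩
    intro a ha b hb hab
    simp only [Finset.coe_singleton, Set.mem_singleton_iff] at ha hb
    exact absurd (ha.trans hb.symm) hab

lemma card_identity {n : ℕ} {G H : SimpleGraph (Fin n)} {v w : Fin n}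
    (φ : gcard G v ≃g gcard H w) (j : ℕ) :
    NN G j + xF H j w = NN H j + xF G j v := by
  have h1 := NN_split G j v
  have h2 := NN_split H j w
  have h3 := NN_iso φ j
  omega

end CliqueAux

/-- The number of `r`-cliques of a graph with average degree at most `d` can be
reconstructed from any deck missing at most
`(n/2 - 1)/(1 + C(2(d+1), r-1)) - d - 5` cards. -/
theorem clique_count_reconstruction {n d r k : ℕ} (hd : 1 ≤ d) (hr : 1 ≤ r)
    (G H : SimpleGraph (Fin n))
    (havg : 2 * ecount G ≤ d * n)
    (hk : 2 * ((k + d + 5) * (1 + Nat.choose (2 * (d + 1)) (r - 1)) + 1 +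
        Nat.choose (2 * (d + 1)) (r - 1)) ≤ n)
    (hshare : SharesCards G H (n - k)) :
    cliqueCount G r = cliqueCount H r := by
  classical
  obtain ⟨S, f, hScard0, hinj, hiso⟩ := hshare
  set c := Nat.choose (2 * (d + 1)) (r - 1) with hc
  rw [cliqueCount_eq_NN, cliqueCount_eq_NN]
  -- arithmetic normalizations
  have hk1 : 2 * ((1 + c) * (k + d + 6)) ≤ n := by
    have he : 2 * ((1 + c) * (k + d + 6)) = 2 * ((k + d + 5) * (1 + c) + 1 + c) := by ring
    omega
  have hkd6 : 2 * (k + d + 6) ≤ n := by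
    have h := Nat.le_mul_of_pos_left (k + d + 6) (show 0 < 1 + c by omega)
    have he : 2 * ((1 + c) * (k + d + 6)) = 2 * ((1 + c) * (k + d + 6)) := rfl
    -- h : k + d + 6 ≤ (1 + c) * (k + d + 6)
    omega
  have hSn : S.card ≤ n := by
    have h := Finset.card_le_univ S
    rwa [Fintype.card_fin] at h
  have hScard : n ≤ S.card + k := by omega
  have hn0 : 0 < n := by omega
  obtain ⟨u₀, hu₀⟩ : ∃ u₀, u₀ ∈ S := by
    have : 0 < S.card := by omega
    obtain ⟨u, hu⟩ := Finset.card_pos.1 this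
    exact ⟨u, hu⟩
  -- the per-card identity
  have hid : ∀ (j : ℕ), ∀ u ∈ S, NN G j + xF H j (f u) = NN H j + xF G j u := by
    intro j u hu
    exact card_identity (hiso u hu).some j
  -- dispatch r = 1
  rcases eq_or_lt_of_le hr with hr1 | hr2
  · have h1 := hid r u₀ hu₀
    rw [← hr1] at h1 ⊢
    rw [xF_one, xF_one] at h1
    omega
  -- now 2 ≤ r
  -- degree sums
  have hsumdeg : ∑ u, G.degree u ≤ d * n := by
    rw [SimpleGraph.sum_degrees_eq_twice_card_edges]
    have he : ecount G = G.edgeFinset.card := by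
      rw [ecount, ← SimpleGraph.coe_edgeFinset, Set.ncard_coe_finset]
    omega
  have hNN2G : 2 * NN G 2 = ∑ u, G.degree u := by
    have hs := sum_xF G 2
    have hdd : ∑ u, xF G 2 u = ∑ u, G.degree u :=
      Finset.sum_congr rfl (fun u _ => xF_two_eq_degree G u)
    omega
  -- mass facts
  set MS := univ.filter (fun u => G.degree u ≤ 2 * d + 2) with hMS
  have hmass : n < 2 * MS.card := by
    set B := univ.filter (fun u => ¬ (G.degree u ≤ 2 * d + 2)) with hB
    have hcompl : MS.card + B.card = n := by
      have h := Finset.card_filter_add_card_filter_not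
        (s := (univ : Finset (Fin n))) (p := fun u => G.degree u ≤ 2 * d + 2)
      rwa [Finset.card_univ, Fintype.card_fin] at h
    have hbig : B.card * (2 * d + 3) ≤ d * n := by
      have h1 := Finset.card_nsmul_le_sum B (fun u => G.degree u) (2 * d + 3)
        (fun x hx => by
          have h := (Finset.mem_filter.1 hx).2
          show 2 * d + 3 ≤ G.degree x
          omega)
      have h1' : B.card * (2 * d + 3) ≤ ∑ u ∈ B, G.degree u := by simpa using h1
      have h2 : ∑ u ∈ B, G.degree u ≤ ∑ u, G.degree u :=
        Finset.sum_le_sum_of_subset (Finset.filter_subset _ _)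
      omega
    by_contra hcon
    push_neg at hcon
    have hBn : n ≤ 2 * B.card := by omega
    have h1 : n * (2 * d + 3) ≤ (2 * B.card) * (2 * d + 3) :=
      Nat.mul_le_mul_right _ hBn
    have h2 : (2 * B.card) * (2 * d + 3) = 2 * (B.card * (2 * d + 3)) := by ring
    have h3 : n * (2 * d + 3) = 2 * (d * n) + 3 * n := by ring
    omega
  have hmassr : MS.card ≤ cumx G r c := by
    unfold cumx
    apply Finset.card_le_card
    intro u hu
    rw [hMS, Finset.mem_filter] at hu
    rw [Finset.mem_filter]
    refine ⟨Finset.mem_univ _, ?_⟩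
    have h1 := xF_le_choose G r (by omega) u
    have h2 : (G.degree u).choose (r - 1) ≤ (2 * d + 2).choose (r - 1) :=
      Nat.choose_le_choose _ hu.2
    have h3 : (2 * d + 2).choose (r - 1) = c := by
      have he : 2 * d + 2 = 2 * (d + 1) := by ring
      rw [he, hc]
    omega
  have hmass2 : MS.card ≤ cumx G 2 (2 * d + 2) := by
    unfold cumx
    apply Finset.card_le_card
    intro u hu
    rw [hMS, Finset.mem_filter] at hu
    rw [Finset.mem_filter]
    refine ⟨Finset.mem_univ _, ?_⟩
    rw [xF_two_eq_degree]
    exact hu.2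
  -- trichotomy
  rcases Nat.lt_trichotomy (NN H r) (NN G r) with hAcase | heq | hBcase
  · -- Case A : NN G r > NN H r
    exfalso
    set Δ := NN G r - NN H r with hΔdef
    have hΔ1 : 1 ≤ Δ := by omega
    have hrelA : ∀ u ∈ S, xF G r u = xF H r (f u) + Δ := by
      intro u hu
      have := hid r u hu
      omega
    -- every shared vertex has degree at least r - 1
    have hdegS : ∀ u ∈ S, r - 1 ≤ G.degree u := by
      intro u hu
      apply deg_ge_of_xF_pos G r u
      have := hrelA u hu
      omega
    have hSsum : S.card * (r - 1) ≤ d * n := by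
      have h1 := Finset.card_nsmul_le_sum S (fun u => G.degree u) (r - 1)
        (fun x hx => by
          show r - 1 ≤ G.degree x
          exact hdegS x hx)
      have h1' : S.card * (r - 1) ≤ ∑ u ∈ S, G.degree u := by simpa using h1
      have h2 : ∑ u ∈ S, G.degree u ≤ ∑ u, G.degree u :=
        Finset.sum_le_sum_of_subset (Finset.subset_univ S)
      omega
    have h2S : n ≤ 2 * S.card := by omega
    have hr2d : r - 1 ≤ 2 * d := by
      have h1 : n * (r - 1) ≤ (2 * S.card) * (r - 1) := Nat.mul_le_mul_right _ h2S
      have h2 : (2 * S.card) * (r - 1) = 2 * (S.card * (r - 1)) := by ring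
      have h4 : 2 * (d * n) = n * (2 * d) := by ring
      have h5 : n * (r - 1) ≤ n * (2 * d) := by omega
      exact Nat.le_of_mul_le_mul_left h5 hn0
    -- c is at least 2d + 2
    have hcge : 2 * d + 2 ≤ c := by
      have h1 := le_choose_of_lt (2 * d + 2) (r - 1) (by omega) (by omega)
      have he : 2 * d + 2 = 2 * (d + 1) := by ring
      rw [he] at h1
      omega
    have hk2 : 2 * ((2 * d + 3) * (k + d + 6)) ≤ n := by
      have h1 : (2 * d + 3) * (k + d + 6) ≤ (1 + c) * (k + d + 6) :=
        Nat.mul_le_mul_right _ (by omega)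
      omega
    -- pivot vertex of small degree
    obtain ⟨v₀, hv₀, hdegv₀⟩ : ∃ v₀ ∈ S, G.degree v₀ ≤ d + 1 := by
      by_contra hno
      push_neg at hno
      have hall : ∀ v ∈ S, d + 2 ≤ G.degree v := by
        intro v hv
        have := hno v hv
        omega
      have h1 := Finset.card_nsmul_le_sum S (fun u => G.degree u) (d + 2)
        (fun x hx => by
          show d + 2 ≤ G.degree x
          exact hall x hx)
      have h1' : S.card * (d + 2) ≤ ∑ u ∈ S, G.degree u := by simpa using h1
      have h2 : ∑ u ∈ S, G.degree u ≤ ∑ u, G.degree u :=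
        Finset.sum_le_sum_of_subset (Finset.subset_univ S)
      have hkd2 : k * (d + 2) ≤ n := by
        have ha : k * (d + 2) ≤ k * (2 * (2 * d + 3)) :=
          Nat.mul_le_mul_left _ (by omega)
        have hb : k * (2 * (2 * d + 3)) ≤ (k + d + 6) * (2 * (2 * d + 3)) :=
          Nat.mul_le_mul_right _ (by omega)
        have hcq : (k + d + 6) * (2 * (2 * d + 3)) = 2 * ((2 * d + 3) * (k + d + 6)) := by
          ring
        omega
      have hx1 : n * (d + 2) ≤ (S.card + k) * (d + 2) := Nat.mul_le_mul_right _ hScard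
      have hx2 : (S.card + k) * (d + 2) = S.card * (d + 2) + k * (d + 2) := by ring
      have hx3 : n * (d + 2) = n * (d + 1) + n := by ring
      have hx4 : d * n + n = n * (d + 1) := by ring
      omega
    have φ₀ := (hiso v₀ hv₀).some
    -- the window bound
    have hwin := window_A hScard hinj hΔ1 hrelA hv₀ φ₀ c
    have hJ : c / Δ + 1 ≤ c + 1 := by
      have := Nat.div_le_self c Δ
      omega
    have hW : k + G.degree v₀ + 1 ≤ k + d + 2 := by omega
    have hJW : (c / Δ + 1) * (k + G.degree v₀ + 1) ≤ (c + 1) * (k + d + 2) :=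
      Nat.mul_le_mul hJ hW
    have hfin : 2 * ((c + 1) * (k + d + 2)) ≤ n := by
      have e1 : (c + 1) * (k + d + 2) ≤ (c + 1) * (k + d + 6) :=
        Nat.mul_le_mul_left _ (by omega)
      have e2 : (c + 1) * (k + d + 6) = (1 + c) * (k + d + 6) := by ring
      omega
    omega
  · exact heq.symm
  · -- Case B : NN G r < NN H r
    exfalso
    set Δ := NN H r - NN G r with hΔdef
    have hΔ1 : 1 ≤ Δ := by omega
    have hrelB : ∀ u ∈ S, xF H r (f u) = xF G r u + Δ := by
      intro u hu
      have := hid r u hu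
      omega
    have hdegS_H : ∀ u ∈ S, r - 1 ≤ H.degree (f u) := by
      intro u hu
      apply deg_ge_of_xF_pos H r (f u)
      have := hrelB u hu
      omega
    -- count vertices of G with degree at least r - 2
    set ψ := (hiso u₀ hu₀).some with hψdef
    set AC := univ.filter (fun w => r - 2 ≤ G.degree w) with hAC
    have hACge : S.card - 1 ≤ AC.card := by
      classical
      set T0 := ((S.erase u₀).image f).subtype (fun w => w ≠ f u₀) with hT0
      have himg_ne : ∀ w ∈ (S.erase u₀).image f, w ≠ f u₀ := by
        intro w hw hweq
        obtain ⟨u, hu, huw⟩ := Finset.mem_image.1 hw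
        have hu' : u ∈ S := Finset.mem_of_mem_erase hu
        have := hinj (Finset.mem_coe.2 hu') (Finset.mem_coe.2 hu₀) (by rw [huw, hweq])
        exact (Finset.mem_erase.1 hu).1 this
      have hT0card : T0.card = S.card - 1 := by
        rw [hT0, card_subtype_of_forall _ _ himg_ne,
          Finset.card_image_of_injOn (hinj.mono (by
            intro x hx
            exact Finset.mem_coe.2 (Finset.mem_of_mem_erase (Finset.mem_coe.1 hx)))),
          Finset.card_erase_of_mem hu₀]
      have hT0sub : T0 ⊆ univ.filter
          (fun w : {w : Fin n // w ≠ f u₀} => r - 2 ≤ xF (gcard H (f u₀)) 2 w) := by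
        intro w hw
        rw [hT0, Finset.mem_subtype] at hw
        obtain ⟨u, hu, huw⟩ := Finset.mem_image.1 hw
        have hu' : u ∈ S := Finset.mem_of_mem_erase hu
        have hdH : r - 1 ≤ H.degree (f u) := hdegS_H u hu'
        have hx2 : xF H 2 (f u) = H.degree (f u) := xF_two_eq_degree H (f u)
        have hsplit := xF_split H 2 (f u) (f u₀)
        have hboth : ((KK H 2).filter (fun s => f u ∈ s ∧ f u₀ ∈ s)).card ≤ 1 := by
          apply xF_both_le_one H
          rw [huw]
          exact w.2
        have havoid : ((KK H 2).filter (fun s => f u ∈ s ∧ f u₀ ∉ s)).card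
            ≤ xF (gcard H (f u₀)) 2 w := by
          have h := card_avoid_le_xF_gcard H 2 w
          rw [← huw] at h
          exact h
        rw [Finset.mem_filter]
        refine ⟨Finset.mem_univ _, ?_⟩
        omega
      have hiso2 : (univ.filter
            (fun w : {w : Fin n // w ≠ u₀} => r - 2 ≤ xF (gcard G u₀) 2 w)).card
          = (univ.filter
            (fun w : {w : Fin n // w ≠ f u₀} => r - 2 ≤ xF (gcard H (f u₀)) 2 w)).card :=
        filter_xF_iso ψ 2 (fun m => r - 2 ≤ m)
      have hPG : (univ.filter
          (fun w : {w : Fin n // w ≠ u₀} => r - 2 ≤ xF (gcard G u₀) 2 w)).card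
          ≤ AC.card := by
        apply Finset.card_le_card_of_injOn (fun w : {w : Fin n // w ≠ u₀} => (w : Fin n))
        · intro w hw
          simp only [Finset.mem_coe] at hw ⊢
          rw [Finset.mem_filter] at hw
          rw [hAC, Finset.mem_filter]
          refine ⟨Finset.mem_univ _, ?_⟩
          have h1 := xF_gcard_le G 2 w
          have h2 : xF G 2 (w : Fin n) = G.degree (w : Fin n) := xF_two_eq_degree G _
          omega
        · intro w _ w' _ h
          exact Subtype.coe_injective h
      have hcard1 := Finset.card_le_card hT0sub
      omega
    have hACsum : AC.card * (r - 2) ≤ d * n := by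
      have h1 := Finset.card_nsmul_le_sum AC (fun u => G.degree u) (r - 2)
        (fun x hx => by
          show r - 2 ≤ G.degree x
          exact (Finset.mem_filter.1 hx).2)
      have h1' : AC.card * (r - 2) ≤ ∑ u ∈ AC, G.degree u := by simpa using h1
      have h2 : ∑ u ∈ AC, G.degree u ≤ ∑ u, G.degree u :=
        Finset.sum_le_sum_of_subset (Finset.filter_subset _ _)
      omega
    have h2S1 : n ≤ 2 * (S.card - 1) := by omega
    have hr2d : r - 2 ≤ 2 * d := by
      have h1 : n * (r - 2) ≤ (2 * (S.card - 1)) * (r - 2) := Nat.mul_le_mul_right _ h2S1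
      have h2 : (2 * (S.card - 1)) * (r - 2) = 2 * ((S.card - 1) * (r - 2)) := by ring
      have h3 : (S.card - 1) * (r - 2) ≤ AC.card * (r - 2) := Nat.mul_le_mul_right _ hACge
      have h4 : 2 * (d * n) = n * (2 * d) := by ring
      have h5 : n * (r - 2) ≤ n * (2 * d) := by omega
      exact Nat.le_of_mul_le_mul_left h5 hn0
    -- c is at least 2d + 2
    have hcge : 2 * d + 2 ≤ c := by
      have h1 := le_choose_of_lt (2 * d + 2) (r - 1) (by omega) (by omega)
      have he : 2 * d + 2 = 2 * (d + 1) := by ring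
      rw [he] at h1
      omega
    have hk2 : 2 * ((2 * d + 3) * (k + d + 6)) ≤ n := by
      have h1 : (2 * d + 3) * (k + d + 6) ≤ (1 + c) * (k + d + 6) :=
        Nat.mul_le_mul_right _ (by omega)
      omega
    -- pivot vertex of small degree
    obtain ⟨v₀, hv₀, hdegv₀⟩ : ∃ v₀ ∈ S, G.degree v₀ ≤ d + 1 := by
      by_contra hno
      push_neg at hno
      have hall : ∀ v ∈ S, d + 2 ≤ G.degree v := by
        intro v hv
        have := hno v hv
        omega
      have h1 := Finset.card_nsmul_le_sum S (fun u => G.degree u) (d + 2)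
        (fun x hx => by
          show d + 2 ≤ G.degree x
          exact hall x hx)
      have h1' : S.card * (d + 2) ≤ ∑ u ∈ S, G.degree u := by simpa using h1
      have h2 : ∑ u ∈ S, G.degree u ≤ ∑ u, G.degree u :=
        Finset.sum_le_sum_of_subset (Finset.subset_univ S)
      have hkd2 : k * (d + 2) ≤ n := by
        have ha : k * (d + 2) ≤ k * (2 * (2 * d + 3)) :=
          Nat.mul_le_mul_left _ (by omega)
        have hb : k * (2 * (2 * d + 3)) ≤ (k + d + 6) * (2 * (2 * d + 3)) :=
          Nat.mul_le_mul_right _ (by omega)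
        have hcq : (k + d + 6) * (2 * (2 * d + 3)) = 2 * ((2 * d + 3) * (k + d + 6)) := by
          ring
        omega
      have hx1 : n * (d + 2) ≤ (S.card + k) * (d + 2) := Nat.mul_le_mul_right _ hScard
      have hx2 : (S.card + k) * (d + 2) = S.card * (d + 2) + k * (d + 2) := by ring
      have hx3 : n * (d + 2) = n * (d + 1) + n := by ring
      have hx4 : d * n + n = n * (d + 1) := by ring
      omega
    have φ₀ := (hiso v₀ hv₀).some
    -- STEP E : the numbers of 2-cliques agree
    have hE : NN G 2 = NN H 2 := by
      rcases Nat.lt_trichotomy (NN H 2) (NN G 2) with hA2 | he2 | hB2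
      · set Δ₂ := NN G 2 - NN H 2 with hΔ₂def
        have hΔ₂1 : 1 ≤ Δ₂ := by omega
        have hrelA2 : ∀ u ∈ S, xF G 2 u = xF H 2 (f u) + Δ₂ := by
          intro u hu
          have := hid 2 u hu
          omega
        have hwin := window_A hScard hinj hΔ₂1 hrelA2 hv₀ φ₀ (2 * d + 2)
        have hJ : (2 * d + 2) / Δ₂ + 1 ≤ 2 * d + 3 := by
          have := Nat.div_le_self (2 * d + 2) Δ₂
          omega
        have hW : k + G.degree v₀ + 1 ≤ k + d + 2 := by omega
        have hJW := Nat.mul_le_mul hJ hW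
        have hfin : 2 * ((2 * d + 3) * (k + d + 2)) ≤ n := by
          have e1 : (2 * d + 3) * (k + d + 2) ≤ (2 * d + 3) * (k + d + 6) :=
            Nat.mul_le_mul_left _ (by omega)
          omega
        omega
      · exact he2.symm
      · set Δ₂ := NN H 2 - NN G 2 with hΔ₂def
        have hΔ₂1 : 1 ≤ Δ₂ := by omega
        have hrelB2 : ∀ u ∈ S, xF H 2 (f u) = xF G 2 u + Δ₂ := by
          intro u hu
          have := hid 2 u hu
          omega
        have hΔ₂2d : Δ₂ ≤ 2 * d := by
          have hs1 : S.card * Δ₂ ≤ ∑ u ∈ S, xF H 2 (f u) := by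
            have h1 := Finset.card_nsmul_le_sum S (fun u => xF H 2 (f u)) Δ₂
              (fun x hx => by
                show Δ₂ ≤ xF H 2 (f x)
                have := hrelB2 x hx
                omega)
            simpa using h1
          have hs2 : ∑ u ∈ S, xF H 2 (f u) = ∑ w ∈ S.image f, xF H 2 w := by
            rw [Finset.sum_image (fun x hx y hy hxy =>
              hinj (Finset.mem_coe.2 hx) (Finset.mem_coe.2 hy) hxy)]
          have hs3 : ∑ w ∈ S.image f, xF H 2 w ≤ ∑ w, xF H 2 w :=
            Finset.sum_le_sum_of_subset (Finset.subset_univ _)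
          have hs4 := sum_xF H 2
          have h2S2 : n ≤ 2 * (S.card - 2) := by omega
          have hmul1 : n * Δ₂ ≤ (2 * (S.card - 2)) * Δ₂ := Nat.mul_le_mul_right _ h2S2
          have hmul2 : (2 * (S.card - 2)) * Δ₂ = 2 * ((S.card - 2) * Δ₂) := by ring
          have hmul3 : (S.card - 2) * Δ₂ = S.card * Δ₂ - 2 * Δ₂ := by rw [Nat.sub_mul]
          have hmul4 : n * (2 * d) = 2 * (d * n) := by ring
          have h5 : n * Δ₂ ≤ n * (2 * d) := by omega
          exact Nat.le_of_mul_le_mul_left h5 hn0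
        have hdegH : H.degree (f v₀) = G.degree v₀ + Δ₂ := by
          have h := hrelB2 v₀ hv₀
          rw [xF_two_eq_degree, xF_two_eq_degree] at h
          exact h
        have hwin := window_B hScard hinj hΔ₂1 hrelB2 hv₀ φ₀ (2 * d + 2)
        set q := (2 * d + 2) / Δ₂ with hqdef
        have hq1 : q ≤ 2 * d + 2 := Nat.div_le_self _ _
        have hq2 : q * Δ₂ ≤ 2 * d + 2 := Nat.div_mul_le_self _ _
        have hWb : k + H.degree (f v₀) + 1 ≤ (k + d + 2) + Δ₂ := by omega
        have hb1 : (q + 1) * (k + H.degree (f v₀) + 1) ≤ (q + 1) * ((k + d + 2) + Δ₂) :=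
          Nat.mul_le_mul_left _ hWb
        have hb2 : (q + 1) * ((k + d + 2) + Δ₂) = (q + 1) * (k + d + 2) + (q * Δ₂ + Δ₂) := by
          ring
        have hb3 : (q + 1) * (k + d + 2) ≤ (2 * d + 3) * (k + d + 2) :=
          Nat.mul_le_mul_right _ (by omega)
        have hb4 : (2 * d + 3) * (k + d + 6) = (2 * d + 3) * (k + d + 2) + 4 * (2 * d + 3) := by
          ring
        omega
    -- degree transfer for the pivot
    have hdeg_tr : H.degree (f v₀) = G.degree v₀ := by
      have h := hid 2 v₀ hv₀
      rw [xF_two_eq_degree, xF_two_eq_degree] at h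
      omega
    -- final window argument
    have hwin := window_B hScard hinj hΔ1 hrelB hv₀ φ₀ c
    have hJ : c / Δ + 1 ≤ c + 1 := by
      have := Nat.div_le_self c Δ
      omega
    have hW : k + H.degree (f v₀) + 1 ≤ k + d + 2 := by omega
    have hJW : (c / Δ + 1) * (k + H.degree (f v₀) + 1) ≤ (c + 1) * (k + d + 2) :=
      Nat.mul_le_mul hJ hW
    have hfin : 2 * ((c + 1) * (k + d + 2)) ≤ n := by
      have e1 : (c + 1) * (k + d + 2) ≤ (c + 1) * (k + d + 6) :=
        Nat.mul_le_mul_left _ (by omega)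
      have e2 : (c + 1) * (k + d + 6) = (1 + c) * (k + d + 6) := by ring
      omega
    omega
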